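/- Let (G, Λ) be a self-similar action of a groupoid on a row-finite k-graph with no sources, C = Λ ⋈ G, A a C*-algebra, S: C → A satisfying S_c*S_c = S_{s(c)} and S_{c1}S_{c2} = ω(c1,c2)S_{c1c2} for central-unitary-valued ω. If S satisfies S_μ S_μ* S_ν S_ν* = Σ_{λ ∈ MCE(μ,ν)} S_λ S_λ* for all μ, ν ∈ Λ, then for all c_1, c_2 ∈ C and any finite independent F with c_1C ∩ c_2C = FC, S_{c_1}S_{c_1}* S_{c_2}S_{c_2}* = ∨_{c ∈ F} S_c S_c*. In particular, for c = λg with λ ∈ Λ, g ∈ G, one has cC = λC and S_c S_c* = S_λ S_λ*. -/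

import Mathlib

/-- A small category, modelled algebraically: a set of morphisms with source and
range maps and a (total, but only meaningful on composable pairs) composition. -/
structure CatStruct (C : Type*) where
  src : C → C
  rng : C → C
  comp : C → C → C
  src_src : ∀ a, src (src a) = src a
  rng_src : ∀ a, rng (src a) = src a
  src_rng : ∀ a, src (rng a) = rng a
  rng_rng : ∀ a, rng (rng a) = rng a
  comp_src : ∀ a, comp a (src a) = a
  rng_comp_self : ∀ a, comp (rng a) a = a
  src_comp : ∀ a b, src a = rng b → src (comp a b) = src b
  rng_comp : ∀ a b, src a = rng b → rng (comp a b) = rng a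
  assoc : ∀ a b c, src a = rng b → src b = rng c →
    comp (comp a b) c = comp a (comp b c)

namespace CatStruct

variable {C : Type*}

/-- The principal right ideal `aC`. -/
def ideal (𝒞 : CatStruct C) (a : C) : Set C :=
  {x | ∃ c, 𝒞.src a = 𝒞.rng c ∧ x = 𝒞.comp a c}

/-- The principal right ideal of `a` relative to a subcategory `D`. -/
def idealIn (𝒞 : CatStruct C) (D : Set C) (a : C) : Set C :=
  {x | ∃ c ∈ D, 𝒞.src a = 𝒞.rng c ∧ x = 𝒞.comp a c}

def LeftCancellative (𝒞 : CatStruct C) : Prop :=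
  ∀ a b c, 𝒞.src a = 𝒞.rng b → 𝒞.src a = 𝒞.rng c →
    𝒞.comp a b = 𝒞.comp a c → b = c

def FinitelyAligned (𝒞 : CatStruct C) : Prop :=
  ∀ a b : C, ∃ F : Finset C, 𝒞.ideal a ∩ 𝒞.ideal b = ⋃ c ∈ F, 𝒞.ideal c

def IsInvertible (𝒞 : CatStruct C) (c : C) : Prop :=
  ∃ c', 𝒞.src c' = 𝒞.rng c ∧ 𝒞.rng c' = 𝒞.src c ∧
    𝒞.comp c c' = 𝒞.rng c ∧ 𝒞.comp c' c = 𝒞.src c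

/-- `a ~ b` : there is an invertible `c` with `a = bc`. -/
def equivR (𝒞 : CatStruct C) (a b : C) : Prop :=
  ∃ c, 𝒞.IsInvertible c ∧ 𝒞.src b = 𝒞.rng c ∧ a = 𝒞.comp b c

def Independent (𝒞 : CatStruct C) (A : Set C) : Prop :=
  ∀ a ∈ A, ∀ a' ∈ A, a ≠ a' → a ∉ 𝒞.ideal a'

end CatStruct

/-- Join of commuting projections by inclusion–exclusion. -/
noncomputable def projJoin {ι : Type*} {A : Type*} [Ring A] (p : ι → A)
    (hcomm : ∀ i j, Commute (p i) (p j)) (F : Finset ι) : A :=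
  ∑ G ∈ F.powerset.filter (fun G => G.Nonempty),
    (-1 : A) ^ (G.card - 1) * G.noncommProd p (fun x _ y _ _ => hcomm x y)

section Aux

namespace CatStruct

variable {C : Type*} (𝒞 : CatStruct C)

lemma mem_ideal_self (a : C) : a ∈ 𝒞.ideal a :=
  ⟨𝒞.src a, (𝒞.rng_src a).symm, (𝒞.comp_src a).symm⟩

lemma ideal_subset {a b : C} (h : b ∈ 𝒞.ideal a) : 𝒞.ideal b ⊆ 𝒞.ideal a := by
  obtain ⟨c, hc1, rfl⟩ := h
  rintro x ⟨e, he1, rfl⟩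
  have he1' : 𝒞.src c = 𝒞.rng e := by rwa [𝒞.src_comp a c hc1] at he1
  exact ⟨𝒞.comp c e, by rw [𝒞.rng_comp c e he1']; exact hc1,
    (𝒞.assoc a c e hc1 he1')⟩

lemma comp_mem_ideal {a c : C} (h : 𝒞.src a = 𝒞.rng c) : 𝒞.comp a c ∈ 𝒞.ideal a :=
  ⟨c, h, rfl⟩

lemma comp_inv_ideal {lam g g' : C} (hlg : 𝒞.src lam = 𝒞.rng g)
    (h1 : 𝒞.src g' = 𝒞.rng g) (h2 : 𝒞.rng g' = 𝒞.src g)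
    (h3 : 𝒞.comp g g' = 𝒞.rng g) (h4 : 𝒞.comp g' g = 𝒞.src g) :
    𝒞.ideal (𝒞.comp lam g) = 𝒞.ideal lam := by
  ext x; constructor
  · rintro ⟨c, hc1, rfl⟩
    have hsg : 𝒞.src g = 𝒞.rng c := by
      rwa [𝒞.src_comp lam g hlg] at hc1
    exact ⟨𝒞.comp g c, by rw [𝒞.rng_comp g c hsg]; exact hlg,
      (𝒞.assoc lam g c hlg hsg)⟩
  · rintro ⟨c, hc1, rfl⟩
    have hgc : 𝒞.rng g = 𝒞.rng c := hlg.symm.trans hc1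
    have hg'c : 𝒞.src g' = 𝒞.rng c := h1.trans hgc
    refine ⟨𝒞.comp g' c, ?_, ?_⟩
    · rw [𝒞.src_comp lam g hlg, 𝒞.rng_comp g' c hg'c, h2]
    · have hgg'c : 𝒞.src g = 𝒞.rng (𝒞.comp g' c) := by
        rw [𝒞.rng_comp g' c hg'c, h2]
      rw [𝒞.assoc lam g (𝒞.comp g' c) hlg hgg'c, ← 𝒞.assoc g g' c h2.symm hg'c,
        h3, hgc, 𝒞.rng_comp_self]

end CatStruct

variable {A : Type*} [NormedRing A] [StarRing A]

lemma star_central (u : A) (hc : ∀ y : A, u * y = y * u) (y : A) :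
    star u * y = y * star u := by
  have h := congrArg star (hc (star y))
  rw [star_mul, star_mul, star_star] at h
  exact h.symm

lemma unit_conj (u x : A) (hc : ∀ y : A, u * y = y * u) (hu : star u * u = 1) :
    (star u * x) * star (star u * x) = x * star x := by
  have hc' := star_central u hc
  rw [star_mul, star_star]
  calc star u * x * (star x * u) = star u * (x * star x * u) := by
        rw [mul_assoc, mul_assoc]
    _ = star u * (u * (x * star x)) := by rw [hc (x * star x)]
    _ = (star u * u) * (x * star x) := by rw [mul_assoc]
    _ = x * star x := by rw [hu, one_mul]

end Aux

section AuxAlg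

variable {C : Type*} {A : Type*} [NormedRing A] [StarRing A]

lemma S_unit_proj (𝒳 : CatStruct C) (S : C → A)
    (hsrc : ∀ c, star (S c) * S c = S (𝒳.src c))
    {v : C} (hv : 𝒳.src v = v) :
    star (S v) = S v ∧ S v * S v = S v := by
  have hSv : star (S v) * S v = S v := by rw [hsrc v, hv]
  have h := congrArg star hSv
  rw [star_mul, star_star] at h
  have hst : star (S v) = S v := h.symm.trans hSv
  have hpr : S v * S v = star (S v) * S v := by rw [hst]
  exact ⟨hst, hpr.trans hSv⟩

lemma absorb_rng (𝒳 : CatStruct C) (S : C → A) (ω : C → C → A)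
    (hsrc : ∀ c, star (S c) * S c = S (𝒳.src c))
    (hcentral : ∀ c₁ c₂ (x : A), Commute (ω c₁ c₂) x)
    (hunitary : ∀ c₁ c₂, star (ω c₁ c₂) * ω c₁ c₂ = 1 ∧ ω c₁ c₂ * star (ω c₁ c₂) = 1)
    (hmul : ∀ c₁ c₂, 𝒳.src c₁ = 𝒳.rng c₂ → S c₁ * S c₂ = ω c₁ c₂ * S (𝒳.comp c₁ c₂))
    (x : C) : S (𝒳.rng x) * S x = S x := by
  set v := 𝒳.rng x with hv
  obtain ⟨hst, hproj⟩ := S_unit_proj 𝒳 S hsrc (𝒳.src_rng x)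
  have hm : S v * S x = ω v x * S x := by
    have := hmul v x (𝒳.src_rng x)
    rwa [𝒳.rng_comp_self x] at this
  have h2 : ω v x * S x = ω v x * (ω v x * S x) := by
    calc ω v x * S x = S v * S x := hm.symm
      _ = (S v * S v) * S x := by rw [hproj]
      _ = S v * (S v * S x) := by rw [mul_assoc]
      _ = S v * (ω v x * S x) := by rw [hm]
      _ = (S v * ω v x) * S x := by rw [mul_assoc]
      _ = (ω v x * S v) * S x := by rw [(hcentral v x (S v)).eq]
      _ = ω v x * (S v * S x) := by rw [mul_assoc]
      _ = ω v x * (ω v x * S x) := by rw [hm]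
  have h3 : S x = ω v x * S x := by
    have h4 := congrArg (fun z => star (ω v x) * z) h2
    simp only [← mul_assoc, (hunitary v x).1, one_mul] at h4
    exact h4
  rw [hm, ← h3]

lemma absorb_src (𝒳 : CatStruct C) (S : C → A) (ω : C → C → A)
    (hsrc : ∀ c, star (S c) * S c = S (𝒳.src c))
    (hcentral : ∀ c₁ c₂ (x : A), Commute (ω c₁ c₂) x)
    (hunitary : ∀ c₁ c₂, star (ω c₁ c₂) * ω c₁ c₂ = 1 ∧ ω c₁ c₂ * star (ω c₁ c₂) = 1)
    (hmul : ∀ c₁ c₂, 𝒳.src c₁ = 𝒳.rng c₂ → S c₁ * S c₂ = ω c₁ c₂ * S (𝒳.comp c₁ c₂))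
    (x : C) : S x * S (𝒳.src x) = S x := by
  set w := 𝒳.src x with hw
  obtain ⟨hst, hproj⟩ := S_unit_proj 𝒳 S hsrc (𝒳.src_src x)
  have hm : S x * S w = ω x w * S x := by
    have := hmul x w (𝒳.rng_src x).symm
    rwa [𝒳.comp_src x] at this
  have h2 : ω x w * S x = ω x w * (ω x w * S x) := by
    calc ω x w * S x = S x * S w := hm.symm
      _ = S x * (S w * S w) := by rw [hproj]
      _ = (S x * S w) * S w := by rw [mul_assoc]
      _ = (ω x w * S x) * S w := by rw [hm]
      _ = ω x w * (S x * S w) := by rw [mul_assoc]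
      _ = ω x w * (ω x w * S x) := by rw [hm]
  have h3 : S x = ω x w * S x := by
    have h4 := congrArg (fun z => star (ω x w) * z) h2
    simp only [← mul_assoc, (hunitary x w).1, one_mul] at h4
    exact h4
  rw [hm, ← h3]

lemma P_comp (𝒳 : CatStruct C) (S : C → A) (ω : C → C → A)
    (hcentral : ∀ c₁ c₂ (x : A), Commute (ω c₁ c₂) x)
    (hunitary : ∀ c₁ c₂, star (ω c₁ c₂) * ω c₁ c₂ = 1 ∧ ω c₁ c₂ * star (ω c₁ c₂) = 1)
    (hmul : ∀ c₁ c₂, 𝒳.src c₁ = 𝒳.rng c₂ → S c₁ * S c₂ = ω c₁ c₂ * S (𝒳.comp c₁ c₂))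
    {a b : C} (hab : 𝒳.src a = 𝒳.rng b) :
    S (𝒳.comp a b) * star (S (𝒳.comp a b)) = S a * (S b * star (S b)) * star (S a) := by
  have hS : S (𝒳.comp a b) = star (ω a b) * (S a * S b) := by
    rw [hmul a b hab, ← mul_assoc, (hunitary a b).1, one_mul]
  rw [hS, unit_conj (ω a b) (S a * S b) (fun y => (hcentral a b y).eq) (hunitary a b).1,
    star_mul, ← mul_assoc, mul_assoc (S a) (S b) (star (S b)), ← mul_assoc]

end AuxAlg
section AuxAlg2

variable {C : Type*} {A : Type*} [NormedRing A] [StarRing A]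

lemma comp_inv_P (𝒳 : CatStruct C) (S : C → A) (ω : C → C → A)
    (hsrc : ∀ c, star (S c) * S c = S (𝒳.src c))
    (hcentral : ∀ c₁ c₂ (x : A), Commute (ω c₁ c₂) x)
    (hunitary : ∀ c₁ c₂, star (ω c₁ c₂) * ω c₁ c₂ = 1 ∧ ω c₁ c₂ * star (ω c₁ c₂) = 1)
    (hmul : ∀ c₁ c₂, 𝒳.src c₁ = 𝒳.rng c₂ → S c₁ * S c₂ = ω c₁ c₂ * S (𝒳.comp c₁ c₂))
    {lam g g' : C} (hlg : 𝒳.src lam = 𝒳.rng g)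
    (h1 : 𝒳.src g' = 𝒳.rng g) (h2 : 𝒳.rng g' = 𝒳.src g)
    (h3 : 𝒳.comp g g' = 𝒳.rng g) (h4 : 𝒳.comp g' g = 𝒳.src g) :
    S (𝒳.comp lam g) * star (S (𝒳.comp lam g)) = S lam * star (S lam) := by
  set c := 𝒳.comp lam g with hc
  have hsc : 𝒳.src c = 𝒳.src g := 𝒳.src_comp lam g hlg
  have hcg' : 𝒳.src c = 𝒳.rng g' := hsc.trans h2.symm
  have hlam_eq : 𝒳.comp c g' = lam := by
    rw [hc, 𝒳.assoc lam g g' hlg h2.symm, h3, ← hlg, 𝒳.comp_src]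
  have e1 : S c * star (S c) = S lam * (S g * star (S g)) * star (S lam) :=
    P_comp 𝒳 S ω hcentral hunitary hmul hlg
  have e2 : S lam * star (S lam) = S c * (S g' * star (S g')) * star (S c) := by
    conv_lhs => rw [← hlam_eq]
    exact P_comp 𝒳 S ω hcentral hunitary hmul hcg'
  have hA : S (𝒳.src lam) * S g = S g := by
    rw [hlg]; exact absorb_rng 𝒳 S ω hsrc hcentral hunitary hmul g
  have hB : S (𝒳.src c) * S g' = S g' := by
    rw [hcg']; exact absorb_rng 𝒳 S ω hsrc hcentral hunitary hmul g'
  have core : ∀ (lm gg : C), star (S lm) * S lm * (S gg * star (S gg)) = S gg * star (S gg) →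
      star (S lm) * (S lm * (S gg * star (S gg)) * star (S lm)) =
        (S gg * star (S gg)) * star (S lm) := by
    intro lm gg habs
    calc star (S lm) * (S lm * (S gg * star (S gg)) * star (S lm))
        = (star (S lm) * S lm * (S gg * star (S gg))) * star (S lm) := by
          simp only [mul_assoc]
      _ = (S gg * star (S gg)) * star (S lm) := by rw [habs]
  have hPQ : (S lam * star (S lam)) * (S c * star (S c)) = S c * star (S c) := by
    calc (S lam * star (S lam)) * (S c * star (S c))
        = (S lam * star (S lam)) * (S lam * (S g * star (S g)) * star (S lam)) := by rw [e1]
      _ = S lam * (star (S lam) * (S lam * (S g * star (S g)) * star (S lam))) := by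
          rw [mul_assoc]
      _ = S lam * ((S g * star (S g)) * star (S lam)) := by
          rw [core lam g (by rw [hsrc lam, ← mul_assoc, hA])]
      _ = S lam * (S g * star (S g)) * star (S lam) := by simp only [mul_assoc]
      _ = S c * star (S c) := e1.symm
  have hQP : (S c * star (S c)) * (S lam * star (S lam)) = S lam * star (S lam) := by
    calc (S c * star (S c)) * (S lam * star (S lam))
        = (S c * star (S c)) * (S c * (S g' * star (S g')) * star (S c)) := by rw [e2]
      _ = S c * (star (S c) * (S c * (S g' * star (S g')) * star (S c))) := by
          rw [mul_assoc]
      _ = S c * ((S g' * star (S g')) * star (S c)) := by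
          rw [core c g' (by rw [hsrc c, ← mul_assoc, hB])]
      _ = S c * (S g' * star (S g')) * star (S c) := by simp only [mul_assoc]
      _ = S lam * star (S lam) := e2.symm
  have h5 := congrArg star hPQ
  rw [star_mul, star_mul, star_mul, star_star, star_star] at h5
  exact h5.symm.trans hQP

end AuxAlg2

lemma projJoin_orth {ι : Type*} {A : Type*} [Ring A] (p : ι → A)
    (hcomm : ∀ i j, Commute (p i) (p j)) (F : Finset ι)
    (horth : ∀ i ∈ F, ∀ j ∈ F, i ≠ j → p i * p j = 0) :
    projJoin p hcomm F = ∑ i ∈ F, p i := by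
  classical
  unfold projJoin
  have hsub : F.powerset.filter (fun G => G.card = 1) ⊆
      F.powerset.filter (fun G => G.Nonempty) := by
    intro G hG
    rw [Finset.mem_filter] at hG ⊢
    exact ⟨hG.1, Finset.card_pos.mp (by omega)⟩
  have hvanish : ∀ G ∈ F.powerset.filter (fun G => G.Nonempty),
      G ∉ F.powerset.filter (fun G => G.card = 1) →
      (-1 : A) ^ (G.card - 1) * G.noncommProd p (fun x _ y _ _ => hcomm x y) = 0 := by
    intro G hG hG1
    rw [Finset.mem_filter] at hG hG1
    have hGF : G ⊆ F := Finset.mem_powerset.mp hG.1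
    have hlt : 1 < G.card := by
      have := Finset.card_pos.mpr hG.2
      rcases Nat.lt_or_ge 1 G.card with h | h
      · exact h
      · exact absurd ⟨hG.1, by omega⟩ hG1
    obtain ⟨a, ha, b, hb, hab⟩ := Finset.one_lt_card.mp hlt
    have hb' : b ∈ G.erase a := Finset.mem_erase.mpr ⟨fun h => hab h.symm, hb⟩
    have e1 := Finset.mul_noncommProd_erase G ha p (fun x _ y _ _ => hcomm x y)
    have e2 := Finset.mul_noncommProd_erase (G.erase a) hb' p
      (Set.Pairwise.mono (Finset.coe_subset.mpr (Finset.erase_subset a G))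
        (fun x _ y _ _ => hcomm x y))
    have hz : G.noncommProd p (fun x _ y _ _ => hcomm x y) = 0 := by
      refine e1.symm.trans ?_
      rw [← e2, ← mul_assoc (p a), horth a (hGF ha) b (hGF hb) hab, zero_mul]
    exact (congrArg (fun z => (-1 : A) ^ (G.card - 1) * z) hz).trans (mul_zero _)
  rw [← Finset.sum_subset hsub hvanish]
  have himg : F.powerset.filter (fun G => G.card = 1) = F.image (fun a => {a}) := by
    ext G
    rw [Finset.mem_filter, Finset.mem_powerset, Finset.mem_image]
    constructor
    · rintro ⟨hGF, hc⟩
      obtain ⟨a, rfl⟩ := Finset.card_eq_one.mp hc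
      exact ⟨a, hGF (Finset.mem_singleton_self a), rfl⟩
    · rintro ⟨a, ha, rfl⟩
      exact ⟨Finset.singleton_subset_iff.mpr ha, Finset.card_singleton a⟩
  rw [himg, Finset.sum_image (fun a _ b _ h => Finset.singleton_injective h)]
  refine Finset.sum_congr rfl fun a _ => ?_
  rw [Finset.noncommProd_singleton, Finset.card_singleton]
  norm_num

section AuxGraph

variable {k : ℕ} {X : Type*} (𝒳 : CatStruct X) (Λset Gset : Set X) (d : X → Fin k → ℕ)

lemma deg_zero_eq_rng
    (hΛunits : ∀ x : X, 𝒳.src x ∈ Λset ∧ 𝒳.rng x ∈ Λset)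
    (hd_comp : ∀ a ∈ Λset, ∀ b ∈ Λset, 𝒳.src a = 𝒳.rng b →
      d (𝒳.comp a b) = d a + d b)
    (hfactorΛ : ∀ lam ∈ Λset, ∀ m n : Fin k → ℕ, d lam = m + n →
      ∃! p : X × X, p.1 ∈ Λset ∧ p.2 ∈ Λset ∧ 𝒳.src p.1 = 𝒳.rng p.2 ∧
        lam = 𝒳.comp p.1 p.2 ∧ d p.1 = m ∧ d p.2 = n)
    {a : X} (ha : a ∈ Λset) (h0 : d a = 0) : a = 𝒳.rng a := by
  obtain ⟨q, hq, hqu⟩ := hfactorΛ a ha 0 0 (by rw [h0, add_zero])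
  have hda : d (𝒳.rng a) = 0 := by
    have h2 := hd_comp (𝒳.rng a) (hΛunits a).2 a ha (𝒳.src_rng a)
    rw [𝒳.rng_comp_self] at h2
    funext i
    have h3 : d a i = d (𝒳.rng a) i + d a i := congrFun h2 i
    have h0i : d a i = 0 := congrFun h0 i
    simp only [Pi.zero_apply] at h0i ⊢
    omega
  have hds : d (𝒳.src a) = 0 := by
    have h2 := hd_comp a ha (𝒳.src a) (hΛunits a).1 (𝒳.rng_src a).symm
    rw [𝒳.comp_src] at h2
    funext i
    have h3 : d a i = d a i + d (𝒳.src a) i := congrFun h2 i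
    have h0i : d a i = 0 := congrFun h0 i
    simp only [Pi.zero_apply] at h0i ⊢
    omega
  have e1 := hqu (𝒳.rng a, a) ⟨(hΛunits a).2, ha, 𝒳.src_rng a, (𝒳.rng_comp_self a).symm, hda, h0⟩
  have e2 := hqu (a, 𝒳.src a) ⟨ha, (hΛunits a).1, (𝒳.rng_src a).symm, (𝒳.comp_src a).symm, h0, hds⟩
  exact (congrArg Prod.fst (e1.trans e2.symm)).symm

lemma comp_deg_zero
    (hΛunits : ∀ x : X, 𝒳.src x ∈ Λset ∧ 𝒳.rng x ∈ Λset)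
    (hd_comp : ∀ a ∈ Λset, ∀ b ∈ Λset, 𝒳.src a = 𝒳.rng b →
      d (𝒳.comp a b) = d a + d b)
    (hfactorΛ : ∀ lam ∈ Λset, ∀ m n : Fin k → ℕ, d lam = m + n →
      ∃! p : X × X, p.1 ∈ Λset ∧ p.2 ∈ Λset ∧ 𝒳.src p.1 = 𝒳.rng p.2 ∧
        lam = 𝒳.comp p.1 p.2 ∧ d p.1 = m ∧ d p.2 = n)
    {lam a : X} (ha : a ∈ Λset) (h0 : d a = 0) (hsl : 𝒳.src lam = 𝒳.rng a) :
    𝒳.comp lam a = lam := by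
  have h := deg_zero_eq_rng 𝒳 Λset d hΛunits hd_comp hfactorΛ ha h0
  have h2 : a = 𝒳.src lam := h.trans hsl.symm
  rw [h2, 𝒳.comp_src]

lemma mem_idealIn_of_mem_ideal
    (hGunits : ∀ x : X, 𝒳.src x ∈ Gset ∧ 𝒳.rng x ∈ Gset)
    (hΛcomp : ∀ a ∈ Λset, ∀ b ∈ Λset, 𝒳.src a = 𝒳.rng b → 𝒳.comp a b ∈ Λset)
    (hfact : ∀ x : X, ∃! p : X × X, p.1 ∈ Λset ∧ p.2 ∈ Gset ∧
      𝒳.src p.1 = 𝒳.rng p.2 ∧ x = 𝒳.comp p.1 p.2)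
    {lam lam0 : X} (hl : lam ∈ Λset) (hl0 : lam0 ∈ Λset) (h : lam ∈ 𝒳.ideal lam0) :
    lam ∈ 𝒳.idealIn Λset lam0 := by
  obtain ⟨z, hz1, hz2⟩ := h
  obtain ⟨⟨δ, kk⟩, ⟨hδΛ, hkG, hδk, hzeq⟩, -⟩ := hfact z
  have hrz : 𝒳.rng z = 𝒳.rng δ := by rw [hzeq]; exact 𝒳.rng_comp δ kk hδk
  have hl0δ : 𝒳.src lam0 = 𝒳.rng δ := hz1.trans hrz
  have hstep : lam = 𝒳.comp (𝒳.comp lam0 δ) kk := by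
    rw [hz2, hzeq, ← 𝒳.assoc lam0 δ kk hl0δ hδk]
  obtain ⟨q, hq, hqu⟩ := hfact lam
  have e1 := hqu (lam, 𝒳.src lam)
    ⟨hl, (hGunits lam).1, (𝒳.rng_src lam).symm, (𝒳.comp_src lam).symm⟩
  have e2 := hqu (𝒳.comp lam0 δ, kk) ⟨hΛcomp lam0 hl0 δ hδΛ hl0δ, hkG,
    by rw [𝒳.src_comp lam0 δ hl0δ]; exact hδk, hstep⟩
  exact ⟨δ, hδΛ, hl0δ, congrArg Prod.fst (e1.trans e2.symm)⟩

lemma eq_of_idealIn_deg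
    (hΛunits : ∀ x : X, 𝒳.src x ∈ Λset ∧ 𝒳.rng x ∈ Λset)
    (hd_comp : ∀ a ∈ Λset, ∀ b ∈ Λset, 𝒳.src a = 𝒳.rng b →
      d (𝒳.comp a b) = d a + d b)
    (hfactorΛ : ∀ lam ∈ Λset, ∀ m n : Fin k → ℕ, d lam = m + n →
      ∃! p : X × X, p.1 ∈ Λset ∧ p.2 ∈ Λset ∧ 𝒳.src p.1 = 𝒳.rng p.2 ∧
        lam = 𝒳.comp p.1 p.2 ∧ d p.1 = m ∧ d p.2 = n)
    {lam lam0 : X} (hl0 : lam0 ∈ Λset)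
    (h : lam ∈ 𝒳.idealIn Λset lam0) (hdeq : d lam = d lam0) : lam = lam0 := by
  obtain ⟨a, haΛ, ha1, ha2⟩ := h
  have hd := hd_comp lam0 hl0 a haΛ ha1
  rw [← ha2, hdeq] at hd
  have h0 : d a = 0 := funext fun i => by
    have h3 : d lam0 i = d lam0 i + d a i := congrFun hd i
    simp only [Pi.zero_apply]
    omega
  rw [ha2, comp_deg_zero 𝒳 Λset d hΛunits hd_comp hfactorΛ haΛ h0 ha1]

lemma idealIn_of_between
    (hΛcomp : ∀ a ∈ Λset, ∀ b ∈ Λset, 𝒳.src a = 𝒳.rng b → 𝒳.comp a b ∈ Λset)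
    (hd_comp : ∀ a ∈ Λset, ∀ b ∈ Λset, 𝒳.src a = 𝒳.rng b →
      d (𝒳.comp a b) = d a + d b)
    (hfactorΛ : ∀ lam ∈ Λset, ∀ m n : Fin k → ℕ, d lam = m + n →
      ∃! p : X × X, p.1 ∈ Λset ∧ p.2 ∈ Λset ∧ 𝒳.src p.1 = 𝒳.rng p.2 ∧
        lam = 𝒳.comp p.1 p.2 ∧ d p.1 = m ∧ d p.2 = n)
    {ξ μ α lam τ : X} (hξΛ : ξ ∈ Λset) (hμΛ : μ ∈ Λset) (hαΛ : α ∈ Λset)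
    (hlamΛ : lam ∈ Λset) (hτΛ : τ ∈ Λset)
    (hμα : 𝒳.src μ = 𝒳.rng α) (hξ1 : ξ = 𝒳.comp μ α)
    (hlτ : 𝒳.src lam = 𝒳.rng τ) (hξ2 : ξ = 𝒳.comp lam τ)
    (hle : ∀ i, d μ i ≤ d lam i) :
    lam ∈ 𝒳.idealIn Λset μ := by
  have hdξ1 : d ξ = d μ + d α := by rw [hξ1]; exact hd_comp μ hμΛ α hαΛ hμα
  have hdξ2 : d ξ = d lam + d τ := by rw [hξ2]; exact hd_comp lam hlamΛ τ hτΛ hlτ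
  obtain ⟨⟨μ₁, α₁⟩, ⟨hμ₁Λ, hα₁Λ, hμ₁α₁, hlamf, hdμ₁, hdα₁⟩, -⟩ :=
    hfactorΛ lam hlamΛ (d μ) (fun i => d lam i - d μ i)
      (funext fun i => by simp only [Pi.add_apply]; have := hle i; omega)
  have hsα₁τ : 𝒳.src α₁ = 𝒳.rng τ := by
    rw [← 𝒳.src_comp μ₁ α₁ hμ₁α₁, ← hlamf]; exact hlτ
  obtain ⟨q, hq, hqu⟩ := hfactorΛ ξ hξΛ (d μ) (fun i => d ξ i - d μ i)
    (funext fun i => by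
      simp only [Pi.add_apply]
      have h1 : d ξ i = d μ i + d α i := congrFun hdξ1 i
      omega)
  have e1 := hqu (μ, α) ⟨hμΛ, hαΛ, hμα, hξ1, rfl,
    funext fun i => by
      show d α i = d ξ i - d μ i
      have h1 : d ξ i = d μ i + d α i := congrFun hdξ1 i
      omega⟩
  have hα₁τΛ : 𝒳.comp α₁ τ ∈ Λset := hΛcomp α₁ hα₁Λ τ hτΛ hsα₁τ
  have hμ₁a : 𝒳.src μ₁ = 𝒳.rng (𝒳.comp α₁ τ) := by
    rw [𝒳.rng_comp α₁ τ hsα₁τ]; exact hμ₁α₁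
  have hξf : ξ = 𝒳.comp μ₁ (𝒳.comp α₁ τ) := by
    rw [hξ2, hlamf, 𝒳.assoc μ₁ α₁ τ hμ₁α₁ hsα₁τ]
  have hdcomp : d (𝒳.comp α₁ τ) = fun i => d ξ i - d μ i := by
    rw [hd_comp α₁ hα₁Λ τ hτΛ hsα₁τ, hdα₁]
    funext i
    have h1 : d ξ i = d lam i + d τ i := congrFun hdξ2 i
    have h2 := hle i
    simp only [Pi.add_apply]
    omega
  have e2 := hqu (μ₁, 𝒳.comp α₁ τ) ⟨hμ₁Λ, hα₁τΛ, hμ₁a, hξf, hdμ₁, hdcomp⟩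
  have e3 : μ = μ₁ := congrArg Prod.fst (e1.trans e2.symm)
  exact ⟨α₁, hα₁Λ, by rw [e3]; exact hμ₁α₁, by rw [hlamf, e3]⟩

lemma align_exists
    (hΛcomp : ∀ a ∈ Λset, ∀ b ∈ Λset, 𝒳.src a = 𝒳.rng b → 𝒳.comp a b ∈ Λset)
    (hfact : ∀ x : X, ∃! p : X × X, p.1 ∈ Λset ∧ p.2 ∈ Gset ∧
      𝒳.src p.1 = 𝒳.rng p.2 ∧ x = 𝒳.comp p.1 p.2)
    (hd_comp : ∀ a ∈ Λset, ∀ b ∈ Λset, 𝒳.src a = 𝒳.rng b →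
      d (𝒳.comp a b) = d a + d b)
    (hfactorΛ : ∀ lam ∈ Λset, ∀ m n : Fin k → ℕ, d lam = m + n →
      ∃! p : X × X, p.1 ∈ Λset ∧ p.2 ∈ Λset ∧ 𝒳.src p.1 = 𝒳.rng p.2 ∧
        lam = 𝒳.comp p.1 p.2 ∧ d p.1 = m ∧ d p.2 = n)
    {μ ν : X} (hμΛ : μ ∈ Λset) (hνΛ : ν ∈ Λset) {x : X}
    (hxμ : x ∈ 𝒳.ideal μ) (hxν : x ∈ 𝒳.ideal ν) :
    ∃ lam, (lam ∈ Λset ∧ lam ∈ 𝒳.idealIn Λset μ ∧ lam ∈ 𝒳.idealIn Λset ν ∧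
      d lam = fun i => max (d μ i) (d ν i)) ∧ x ∈ 𝒳.ideal lam := by
  obtain ⟨a, ha1, ha2⟩ := hxμ
  obtain ⟨b, hb1, hb2⟩ := hxν
  obtain ⟨⟨α, h⟩, ⟨hαΛ, hhG, hαh, haeq⟩, -⟩ := hfact a
  obtain ⟨⟨β, h₂⟩, ⟨hβΛ, hh₂G, hβh, hbeq⟩, -⟩ := hfact b
  have hμα : 𝒳.src μ = 𝒳.rng α := ha1.trans (by rw [haeq]; exact 𝒳.rng_comp α h hαh)
  have hνβ : 𝒳.src ν = 𝒳.rng β := hb1.trans (by rw [hbeq]; exact 𝒳.rng_comp β h₂ hβh)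
  have hξΛ : 𝒳.comp μ α ∈ Λset := hΛcomp μ hμΛ α hαΛ hμα
  have hξ'Λ : 𝒳.comp ν β ∈ Λset := hΛcomp ν hνΛ β hβΛ hνβ
  have hx1 : x = 𝒳.comp (𝒳.comp μ α) h := by
    rw [ha2, haeq, ← 𝒳.assoc μ α h hμα hαh]
  have hx2 : x = 𝒳.comp (𝒳.comp ν β) h₂ := by
    rw [hb2, hbeq, ← 𝒳.assoc ν β h₂ hνβ hβh]
  have hsξ : 𝒳.src (𝒳.comp μ α) = 𝒳.rng h := by
    rw [𝒳.src_comp μ α hμα]; exact hαh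
  have hsξ' : 𝒳.src (𝒳.comp ν β) = 𝒳.rng h₂ := by
    rw [𝒳.src_comp ν β hνβ]; exact hβh
  obtain ⟨q, hq, hqu⟩ := hfact x
  have e1 := hqu (𝒳.comp μ α, h) ⟨hξΛ, hhG, hsξ, hx1⟩
  have e2 := hqu (𝒳.comp ν β, h₂) ⟨hξ'Λ, hh₂G, hsξ', hx2⟩
  have hξeq : 𝒳.comp μ α = 𝒳.comp ν β := congrArg Prod.fst (e1.trans e2.symm)
  have hdξμ : d (𝒳.comp μ α) = d μ + d α := hd_comp μ hμΛ α hαΛ hμα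
  have hdξν : d (𝒳.comp μ α) = d ν + d β := by
    rw [hξeq]; exact hd_comp ν hνΛ β hβΛ hνβ
  have hle : ∀ i, max (d μ i) (d ν i) ≤ d (𝒳.comp μ α) i := fun i => by
    have h1 : d (𝒳.comp μ α) i = d μ i + d α i := congrFun hdξμ i
    have h2 : d (𝒳.comp μ α) i = d ν i + d β i := congrFun hdξν i
    omega
  obtain ⟨⟨lam, τ⟩, ⟨hlamΛ, hτΛ, hlτ, hξlτ, hdlam, hdτ⟩, -⟩ :=
    hfactorΛ (𝒳.comp μ α) hξΛ (fun i => max (d μ i) (d ν i))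
      (fun i => d (𝒳.comp μ α) i - max (d μ i) (d ν i))
      (funext fun i => by simp only [Pi.add_apply]; have := hle i; omega)
  have hdlam' : ∀ i, d lam i = max (d μ i) (d ν i) := fun i => congrFun hdlam i
  have hmem1 : lam ∈ 𝒳.idealIn Λset μ :=
    idealIn_of_between 𝒳 Λset d hΛcomp hd_comp hfactorΛ hξΛ hμΛ hαΛ hlamΛ hτΛ
      hμα rfl hlτ hξlτ (fun i => by have := hdlam' i; omega)
  have hmem2 : lam ∈ 𝒳.idealIn Λset ν :=
    idealIn_of_between 𝒳 Λset d hΛcomp hd_comp hfactorΛ hξΛ hνΛ hβΛ hlamΛ hτΛ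
      hνβ hξeq hlτ hξlτ (fun i => by have := hdlam' i; omega)
  have hsτ : 𝒳.src τ = 𝒳.rng h := by
    rw [← 𝒳.src_comp lam τ hlτ, ← hξlτ]; exact hsξ
  refine ⟨lam, ⟨hlamΛ, hmem1, hmem2, hdlam⟩,
    ⟨𝒳.comp τ h, by rw [𝒳.rng_comp τ h hsτ]; exact hlτ, ?_⟩⟩
  rw [hx1, hξlτ, 𝒳.assoc lam τ h hlτ hsτ]

end AuxGraph


/-- for a self-similar action of a groupoid on a row-finite
`k`-graph with no sources (modelled as an ambient Zappa–Szép product `X` with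
wide subcategories `Λset`, `Gset`), if `S` satisfies (TCK3) on `Λ` then it
satisfies the range relation (R3) on all of `C = Λ ⋈ G`; in particular
`cC = λC` and `S_c S_c* = S_λ S_λ*` for `c = λg`. -/
theorem tck3_implies_range_relation {k : ℕ} {X : Type*} (𝒳 : CatStruct X)
    (Λset Gset : Set X)
    (hΛunits : ∀ x : X, 𝒳.src x ∈ Λset ∧ 𝒳.rng x ∈ Λset)
    (hGunits : ∀ x : X, 𝒳.src x ∈ Gset ∧ 𝒳.rng x ∈ Gset)
    (hΛcomp : ∀ a ∈ Λset, ∀ b ∈ Λset, 𝒳.src a = 𝒳.rng b → 𝒳.comp a b ∈ Λset)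
    (hGcomp : ∀ a ∈ Gset, ∀ b ∈ Gset, 𝒳.src a = 𝒳.rng b → 𝒳.comp a b ∈ Gset)
    (hfact : ∀ x : X, ∃! p : X × X, p.1 ∈ Λset ∧ p.2 ∈ Gset ∧
      𝒳.src p.1 = 𝒳.rng p.2 ∧ x = 𝒳.comp p.1 p.2)
    (hG : ∀ g ∈ Gset, ∃ g' ∈ Gset, 𝒳.src g' = 𝒳.rng g ∧ 𝒳.rng g' = 𝒳.src g ∧
      𝒳.comp g g' = 𝒳.rng g ∧ 𝒳.comp g' g = 𝒳.src g)
    (d : X → Fin k → ℕ)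
    (hd_comp : ∀ a ∈ Λset, ∀ b ∈ Λset, 𝒳.src a = 𝒳.rng b →
      d (𝒳.comp a b) = d a + d b)
    (hfactorΛ : ∀ lam ∈ Λset, ∀ m n : Fin k → ℕ, d lam = m + n →
      ∃! p : X × X, p.1 ∈ Λset ∧ p.2 ∈ Λset ∧ 𝒳.src p.1 = 𝒳.rng p.2 ∧
        lam = 𝒳.comp p.1 p.2 ∧ d p.1 = m ∧ d p.2 = n)
    (hdeg : ∀ g ∈ Gset, ∀ lam ∈ Λset, 𝒳.src g = 𝒳.rng lam →
      ∀ lam' ∈ Λset, ∀ g' ∈ Gset, 𝒳.src lam' = 𝒳.rng g' →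
        𝒳.comp g lam = 𝒳.comp lam' g' → d lam' = d lam)
    (hrow : ∀ v : X, 𝒳.src v = v → ∀ n : Fin k → ℕ,
      {lam | lam ∈ Λset ∧ 𝒳.rng lam = v ∧ d lam = n}.Finite ∧
      {lam | lam ∈ Λset ∧ 𝒳.rng lam = v ∧ d lam = n}.Nonempty)
    {A : Type*} [NormedRing A] [StarRing A] [CStarRing A]
    (S : X → A) (ω : X → X → A)
    (hsrc : ∀ c, star (S c) * S c = S (𝒳.src c))
    (hcentral : ∀ c₁ c₂ (x : A), Commute (ω c₁ c₂) x)
    (hunitary : ∀ c₁ c₂, star (ω c₁ c₂) * ω c₁ c₂ = 1 ∧ ω c₁ c₂ * star (ω c₁ c₂) = 1)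
    (hmul : ∀ c₁ c₂, 𝒳.src c₁ = 𝒳.rng c₂ →
      S c₁ * S c₂ = ω c₁ c₂ * S (𝒳.comp c₁ c₂))
    (hPcomm : ∀ x y : X, Commute (S x * star (S x)) (S y * star (S y)))
    (hTCK3 : ∀ μ ∈ Λset, ∀ ν ∈ Λset, ∀ M : Finset X,
      ↑M = {lam | lam ∈ Λset ∧ lam ∈ 𝒳.idealIn Λset μ ∧ lam ∈ 𝒳.idealIn Λset ν ∧
        d lam = fun i => max (d μ i) (d ν i)} →
      S μ * star (S μ) * (S ν * star (S ν)) = ∑ lam ∈ M, S lam * star (S lam)) :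
    (∀ c₁ c₂ : X, ∀ F : Finset X, 𝒳.Independent ↑F →
      𝒳.ideal c₁ ∩ 𝒳.ideal c₂ = (⋃ c ∈ F, 𝒳.ideal c) →
      S c₁ * star (S c₁) * (S c₂ * star (S c₂)) =
        projJoin (fun c => S c * star (S c)) hPcomm F) ∧
    (∀ lam ∈ Λset, ∀ g ∈ Gset, 𝒳.src lam = 𝒳.rng g →
      𝒳.ideal (𝒳.comp lam g) = 𝒳.ideal lam ∧
      S (𝒳.comp lam g) * star (S (𝒳.comp lam g)) = S lam * star (S lam)) := by
  constructor
  · intro c₁ c₂ F hFind hFunion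
    classical
    obtain ⟨⟨μ, g₁⟩, ⟨hμΛ, hg₁G, hμg₁, hc₁⟩, -⟩ := hfact c₁
    obtain ⟨⟨ν, g₂⟩, ⟨hνΛ, hg₂G, hνg₂, hc₂⟩, -⟩ := hfact c₂
    obtain ⟨g₁', hg₁'G, hi11, hi12, hi13, hi14⟩ := hG g₁ hg₁G
    obtain ⟨g₂', hg₂'G, hi21, hi22, hi23, hi24⟩ := hG g₂ hg₂G
    have hPc₁ : S c₁ * star (S c₁) = S μ * star (S μ) := by
      rw [hc₁]; exact comp_inv_P 𝒳 S ω hsrc hcentral hunitary hmul hμg₁ hi11 hi12 hi13 hi14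
    have hIc₁ : 𝒳.ideal c₁ = 𝒳.ideal μ := by
      rw [hc₁]; exact 𝒳.comp_inv_ideal hμg₁ hi11 hi12 hi13 hi14
    have hPc₂ : S c₂ * star (S c₂) = S ν * star (S ν) := by
      rw [hc₂]; exact comp_inv_P 𝒳 S ω hsrc hcentral hunitary hmul hνg₂ hi21 hi22 hi23 hi24
    have hIc₂ : 𝒳.ideal c₂ = 𝒳.ideal ν := by
      rw [hc₂]; exact 𝒳.comp_inv_ideal hνg₂ hi21 hi22 hi23 hi24
    have hμν : 𝒳.ideal μ ∩ 𝒳.ideal ν = ⋃ c ∈ F, 𝒳.ideal c := by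
      rw [← hIc₁, ← hIc₂]; exact hFunion
    have hMfin : {lam | lam ∈ Λset ∧ lam ∈ 𝒳.idealIn Λset μ ∧ lam ∈ 𝒳.idealIn Λset ν ∧
        d lam = fun i => max (d μ i) (d ν i)}.Finite := by
      apply ((hrow (𝒳.rng μ) (𝒳.src_rng μ) (fun i => max (d μ i) (d ν i))).1).subset
      rintro lam ⟨h1, ⟨a, haΛ, ha1, ha2⟩, -, h4⟩
      exact ⟨h1, by rw [ha2]; exact 𝒳.rng_comp μ a ha1, h4⟩
    set M := hMfin.toFinset with hMdef
    have hsum := hTCK3 μ hμΛ ν hνΛ M hMfin.coe_toFinset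
    have horthΛ : ∀ lam lam' : X, lam ∈ Λset → lam' ∈ Λset → d lam = d lam' → lam ≠ lam' →
        S lam * star (S lam) * (S lam' * star (S lam')) = 0 := by
      intro lam lam' hl hl' hdd hne
      have hempty : (↑(∅ : Finset X) : Set X) = {ρ | ρ ∈ Λset ∧ ρ ∈ 𝒳.idealIn Λset lam ∧
          ρ ∈ 𝒳.idealIn Λset lam' ∧ d ρ = fun i => max (d lam i) (d lam' i)} := by
        symm
        rw [Finset.coe_empty, Set.eq_empty_iff_forall_notMem]
        rintro ρ ⟨hρΛ, hm1, hm2, hdρ⟩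
        have hdρ1 : d ρ = d lam := by
          funext i
          have b1 : d ρ i = max (d lam i) (d lam' i) := congrFun hdρ i
          have b2 : d lam i = d lam' i := congrFun hdd i
          omega
        have e1 : ρ = lam := eq_of_idealIn_deg 𝒳 Λset d hΛunits hd_comp hfactorΛ hl hm1 hdρ1
        have e2 : ρ = lam' := eq_of_idealIn_deg 𝒳 Λset d hΛunits hd_comp hfactorΛ hl' hm2
          (hdρ1.trans hdd)
        exact hne (e1.symm.trans e2)
      have h0 := hTCK3 lam hl lam' hl' ∅ hempty
      rwa [Finset.sum_empty] at h0
    have hkey : ∀ c ∈ F, ∃ lam ∈ M, 𝒳.ideal c = 𝒳.ideal lam ∧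
        S c * star (S c) = S lam * star (S lam) := by
      intro c hc
      have hcU : c ∈ ⋃ c' ∈ F, 𝒳.ideal c' :=
        Set.mem_iUnion₂.mpr ⟨c, hc, 𝒳.mem_ideal_self c⟩
      rw [← hμν] at hcU
      obtain ⟨lam, hlamMCE, hclam⟩ := align_exists 𝒳 Λset Gset d hΛcomp hfact hd_comp hfactorΛ
        hμΛ hνΛ hcU.1 hcU.2
      have hlamM : lam ∈ M := hMfin.mem_toFinset.mpr hlamMCE
      obtain ⟨x, hx1, hx2⟩ := hclam
      obtain ⟨⟨α, h⟩, ⟨hαΛ, hhG, hαh, hxeq⟩, -⟩ := hfact x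
      have hlamα : 𝒳.src lam = 𝒳.rng α := hx1.trans (by rw [hxeq]; exact 𝒳.rng_comp α h hαh)
      have hξΛ : 𝒳.comp lam α ∈ Λset := hΛcomp lam hlamMCE.1 α hαΛ hlamα
      have hsξh : 𝒳.src (𝒳.comp lam α) = 𝒳.rng h := by
        rw [𝒳.src_comp lam α hlamα]; exact hαh
      have hcξh : c = 𝒳.comp (𝒳.comp lam α) h := by
        rw [hx2, hxeq, ← 𝒳.assoc lam α h hlamα hαh]
      obtain ⟨h', hh'G, hj1, hj2, hj3, hj4⟩ := hG h hhG
      have hPcξ : S c * star (S c) = S (𝒳.comp lam α) * star (S (𝒳.comp lam α)) := by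
        rw [hcξh]; exact comp_inv_P 𝒳 S ω hsrc hcentral hunitary hmul hsξh hj1 hj2 hj3 hj4
      have hIcξ : 𝒳.ideal c = 𝒳.ideal (𝒳.comp lam α) := by
        rw [hcξh]; exact 𝒳.comp_inv_ideal hsξh hj1 hj2 hj3 hj4
      have hlamU : lam ∈ ⋃ c' ∈ F, 𝒳.ideal c' := by
        rw [← hμν]
        obtain ⟨a1, ha1Λ, ha11, ha12⟩ := hlamMCE.2.1
        obtain ⟨b1, hb1Λ, hb11, hb12⟩ := hlamMCE.2.2.1
        exact ⟨⟨a1, ha11, ha12⟩, ⟨b1, hb11, hb12⟩⟩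
      rw [Set.mem_iUnion₂] at hlamU
      obtain ⟨c', hc'F, hlamc'⟩ := hlamU
      have hcc' : c ∈ 𝒳.ideal c' := by
        apply 𝒳.ideal_subset hlamc'
        apply 𝒳.ideal_subset (𝒳.comp_mem_ideal hlamα)
        rw [← hIcξ]; exact 𝒳.mem_ideal_self c
      have hceq : c = c' := by
        by_contra hne
        exact hFind c (Finset.mem_coe.mpr hc) c' (Finset.mem_coe.mpr hc'F) hne hcc'
      rw [← hceq] at hlamc'
      obtain ⟨y, hy1, hy2⟩ := hlamc'
      obtain ⟨⟨γ, kk⟩, ⟨hγΛ, hkkG, hγk, hyeq⟩, -⟩ := hfact y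
      have hsrc_c : 𝒳.src c = 𝒳.src h := by
        rw [hcξh]; exact 𝒳.src_comp (𝒳.comp lam α) h hsξh
      have hhy : 𝒳.src h = 𝒳.rng y := hsrc_c.symm.trans hy1
      have hhγ : 𝒳.src h = 𝒳.rng γ := hhy.trans (by rw [hyeq]; exact 𝒳.rng_comp γ kk hγk)
      obtain ⟨⟨γ', h₂⟩, ⟨hγ'Λ, hh₂G, hγ'h₂, hhγeq⟩, -⟩ := hfact (𝒳.comp h γ)
      have hsh₂kk : 𝒳.src h₂ = 𝒳.rng kk := by
        calc 𝒳.src h₂ = 𝒳.src (𝒳.comp γ' h₂) := (𝒳.src_comp γ' h₂ hγ'h₂).symm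
          _ = 𝒳.src (𝒳.comp h γ) := by rw [hhγeq]
          _ = 𝒳.src γ := 𝒳.src_comp h γ hhγ
          _ = 𝒳.rng kk := hγk
      have hrngγ' : 𝒳.rng γ' = 𝒳.rng h := by
        calc 𝒳.rng γ' = 𝒳.rng (𝒳.comp γ' h₂) := (𝒳.rng_comp γ' h₂ hγ'h₂).symm
          _ = 𝒳.rng (𝒳.comp h γ) := by rw [hhγeq]
          _ = 𝒳.rng h := 𝒳.rng_comp h γ hhγ
      have hsξγ' : 𝒳.src (𝒳.comp lam α) = 𝒳.rng γ' := hsξh.trans hrngγ'.symm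
      have hsγ'c : 𝒳.src γ' = 𝒳.rng (𝒳.comp h₂ kk) :=
        hγ'h₂.trans (𝒳.rng_comp h₂ kk hsh₂kk).symm
      have step4 : lam = 𝒳.comp (𝒳.comp (𝒳.comp lam α) γ') (𝒳.comp h₂ kk) := by
        calc lam = 𝒳.comp c y := hy2
          _ = 𝒳.comp (𝒳.comp (𝒳.comp lam α) h) y := by rw [← hcξh]
          _ = 𝒳.comp (𝒳.comp lam α) (𝒳.comp h y) := 𝒳.assoc _ h y hsξh hhy
          _ = 𝒳.comp (𝒳.comp lam α) (𝒳.comp h (𝒳.comp γ kk)) := by rw [← hyeq]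
          _ = 𝒳.comp (𝒳.comp lam α) (𝒳.comp (𝒳.comp h γ) kk) := by
              rw [𝒳.assoc h γ kk hhγ hγk]
          _ = 𝒳.comp (𝒳.comp lam α) (𝒳.comp (𝒳.comp γ' h₂) kk) := by rw [hhγeq]
          _ = 𝒳.comp (𝒳.comp lam α) (𝒳.comp γ' (𝒳.comp h₂ kk)) := by
              rw [𝒳.assoc γ' h₂ kk hγ'h₂ hsh₂kk]
          _ = 𝒳.comp (𝒳.comp (𝒳.comp lam α) γ') (𝒳.comp h₂ kk) :=
              (𝒳.assoc _ γ' _ hsξγ' hsγ'c).symm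
      obtain ⟨q, hq, hqu⟩ := hfact lam
      have e1 := hqu (lam, 𝒳.src lam)
        ⟨hlamMCE.1, (hGunits lam).1, (𝒳.rng_src lam).symm, (𝒳.comp_src lam).symm⟩
      have e2 := hqu (𝒳.comp (𝒳.comp lam α) γ', 𝒳.comp h₂ kk)
        ⟨hΛcomp _ hξΛ γ' hγ'Λ hsξγ', hGcomp h₂ hh₂G kk hkkG hsh₂kk,
          by rw [𝒳.src_comp _ γ' hsξγ']; exact hsγ'c, step4⟩
      have hlamf : lam = 𝒳.comp (𝒳.comp lam α) γ' := congrArg Prod.fst (e1.trans e2.symm)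
      have hdξ : d (𝒳.comp lam α) = d lam + d α := hd_comp lam hlamMCE.1 α hαΛ hlamα
      have hdlam2 : d lam = d (𝒳.comp lam α) + d γ' := by
        conv_lhs => rw [hlamf]
        exact hd_comp _ hξΛ γ' hγ'Λ hsξγ'
      have hα0 : d α = 0 := funext fun i => by
        have a1 : d (𝒳.comp lam α) i = d lam i + d α i := congrFun hdξ i
        have a2 : d lam i = d (𝒳.comp lam α) i + d γ' i := congrFun hdlam2 i
        simp only [Pi.zero_apply]
        omega
      have hξlam : 𝒳.comp lam α = lam :=
        comp_deg_zero 𝒳 Λset d hΛunits hd_comp hfactorΛ hαΛ hα0 hlamα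
      exact ⟨lam, hlamM, by rw [hIcξ, hξlam], by rw [hPcξ, hξlam]⟩
    choose φ hφM hφI hφP using hkey
    have hPorthF : ∀ c ∈ F, ∀ c' ∈ F, c ≠ c' →
        S c * star (S c) * (S c' * star (S c')) = 0 := by
      intro c hc c' hc' hne
      have hφne : φ c hc ≠ φ c' hc' := by
        intro he
        apply hFind c (Finset.mem_coe.mpr hc) c' (Finset.mem_coe.mpr hc') hne
        rw [hφI c' hc', ← he, ← hφI c hc]
        exact 𝒳.mem_ideal_self c
      rw [hφP c hc, hφP c' hc']
      have hm1 := hMfin.mem_toFinset.mp (hφM c hc)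
      have hm2 := hMfin.mem_toFinset.mp (hφM c' hc')
      exact horthΛ _ _ hm1.1 hm2.1 (by rw [hm1.2.2.2, hm2.2.2.2]) hφne
    have hsum2 : ∑ lam ∈ M, S lam * star (S lam) = ∑ c ∈ F, S c * star (S c) := by
      symm
      apply Finset.sum_bij (fun c hc => φ c hc)
      · intro a ha; exact hφM a ha
      · intro a ha b hb he
        by_contra hne
        apply hFind a (Finset.mem_coe.mpr ha) b (Finset.mem_coe.mpr hb) hne
        rw [hφI b hb, ← he, ← hφI a ha]
        exact 𝒳.mem_ideal_self a
      · intro lam hlamM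
        have hlamMCE := hMfin.mem_toFinset.mp hlamM
        have hlamU : lam ∈ ⋃ c' ∈ F, 𝒳.ideal c' := by
          rw [← hμν]
          obtain ⟨a1, ha1Λ, ha11, ha12⟩ := hlamMCE.2.1
          obtain ⟨b1, hb1Λ, hb11, hb12⟩ := hlamMCE.2.2.1
          exact ⟨⟨a1, ha11, ha12⟩, ⟨b1, hb11, hb12⟩⟩
        rw [Set.mem_iUnion₂] at hlamU
        obtain ⟨c, hcF, hlamc⟩ := hlamU
        refine ⟨c, hcF, ?_⟩
        have hmφ := hMfin.mem_toFinset.mp (hφM c hcF)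
        have hlamIn : lam ∈ 𝒳.idealIn Λset (φ c hcF) :=
          mem_idealIn_of_mem_ideal 𝒳 Λset Gset hGunits hΛcomp hfact hlamMCE.1 hmφ.1
            (by rw [← hφI c hcF]; exact hlamc)
        exact (eq_of_idealIn_deg 𝒳 Λset d hΛunits hd_comp hfactorΛ hmφ.1 hlamIn
          (by rw [hlamMCE.2.2.2, hmφ.2.2.2])).symm
      · intro a ha; exact hφP a ha
    calc S c₁ * star (S c₁) * (S c₂ * star (S c₂))
        = S μ * star (S μ) * (S ν * star (S ν)) := by rw [hPc₁, hPc₂]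
      _ = ∑ lam ∈ M, S lam * star (S lam) := hsum
      _ = ∑ c ∈ F, S c * star (S c) := hsum2
      _ = projJoin (fun c => S c * star (S c)) hPcomm F :=
          (projJoin_orth (fun c => S c * star (S c)) hPcomm F hPorthF).symm
  · intro lam hlam g hg hlg
    obtain ⟨g', hg'G, h1, h2, h3, h4⟩ := hG g hg
    exact ⟨𝒳.comp_inv_ideal hlg h1 h2 h3 h4,
      comp_inv_P 𝒳 S ω hsrc hcentral hunitary hmul hlg h1 h2 h3 h4⟩
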